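/- The N-truncated refined Antimirov automaton accepts the trace closure when the language has uniform rank at most N: if E is a regular expression over Σ such that ⟦E⟧ has uniform rank at most N, then for every word u, u ∈ [⟦E⟧] if and only if either (u = ε and E↓) or (u ≠ ε and there exist E₀, E₁ with E →^{I*}_N (u; [E₀, E₁]), E₀↓ and E₁↓). -/

import Mathlib

open RegularExpression
open scoped Classical

universe u

variable {α : Type u}

/-- Two words are independent if every letter of the first is independent
of every letter of the second. -/
def WIndep (I : α → α → Prop) (u v : List α) : Prop :=
  ∀ a ∈ u, ∀ b ∈ v, I a b

/-- Trace equivalence: the least equivalence relation on words containing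
all pairs (x ++ [a,b] ++ y, x ++ [b,a] ++ y) with a I b. -/
inductive TrEq (I : α → α → Prop) : List α → List α → Prop
  | swap (x y : List α) {a b : α} : I a b → TrEq I (x ++ [a, b] ++ y) (x ++ [b, a] ++ y)
  | refl (u : List α) : TrEq I u u
  | symm {u v : List α} : TrEq I u v → TrEq I v u
  | trans {u v w : List α} : TrEq I u v → TrEq I v w → TrEq I u w

/-- Trace closure of a language. -/
def TrClosure (I : α → α → Prop) (L : Set (List α)) : Set (List α) :=
  {w | ∃ z ∈ L, TrEq I w z}

/-- u ⊲ z ⊳ v with exactly n blocks of u: there are nonempty words u₁,…,uₙ and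
words v₀,…,vₙ (with v₁,…,v_{n-1} nonempty) such that u = u₁⋯uₙ, v = v₀⋯vₙ,
z = v₀u₁v₁⋯uₙvₙ and vⱼ I uᵢ whenever j < i. -/
def ScatN (I : α → α → Prop) (n : ℕ) (u z v : List α) : Prop :=
  ∃ us vs : ℕ → List α,
    (∀ i, 1 ≤ i → i ≤ n → us i ≠ []) ∧
    (∀ j, 1 ≤ j → j ≤ n - 1 → vs j ≠ []) ∧
    u = ((List.range n).map (fun i => us (i + 1))).flatten ∧
    v = ((List.range (n + 1)).map vs).flatten ∧
    z = vs 0 ++ ((List.range n).map (fun i => us (i + 1) ++ vs (i + 1))).flatten ∧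
    (∀ i j, 1 ≤ i → i ≤ n → j < i → WIndep I (vs j) (us i))

/-- u ⊲ z ⊳ v -/
def Scat (I : α → α → Prop) (u z v : List α) : Prop :=
  ∃ n, ScatN I n u z v

/-- u ∼⊲ z ⊳ v -/
def EqScat (I : α → α → Prop) (u z v : List α) : Prop :=
  ∃ u', TrEq I u u' ∧ Scat I u' z v

/-- u ∼⊲ z ⊳∼ v -/
def EqScatEq (I : α → α → Prop) (u z v : List α) : Prop :=
  ∃ u' v', TrEq I u u' ∧ Scat I u' z v' ∧ TrEq I v' v

/-- u ∼⊲_N z ⊳∼ v : as EqScatEq, with the number of blocks bounded by N -/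
def EqScatEqLe (I : α → α → Prop) (N : ℕ) (u z v : List α) : Prop :=
  ∃ u' v', TrEq I u u' ∧ (∃ n ≤ N, ScatN I n u' z v') ∧ TrEq I v' v

/-- Reordering concatenation of words. -/
def rconc (I : α → α → Prop) : List α → List α → Set (List α)
  | [], v => {v}
  | a :: u, [] => {a :: u}
  | a :: u, b :: v =>
      (List.cons a) '' rconc I u (b :: v) ∪
      {z | WIndep I (a :: u) [b] ∧ ∃ w ∈ rconc I (a :: u) v, z = b :: w}
termination_by u v => u.length + v.length

/-- Reordering concatenation lifted to languages. -/
def rconcL (I : α → α → Prop) (L L' : Set (List α)) : Set (List α) :=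
  {z | ∃ u ∈ L, ∃ v ∈ L', z ∈ rconc I u v}

/-- The reorderable part of a language w.r.t. a word. -/
def RPart (I : α → α → Prop) (u : List α) (L : Set (List α)) : Set (List α) :=
  {v ∈ L | WIndep I v u}

/-- The reordering derivative of a language along a word. -/
def RDeriv (I : α → α → Prop) (u : List α) (L : Set (List α)) : Set (List α) :=
  {v | ∃ z ∈ L, EqScat I u z v}

/-- Syntactic reorderable part of a regexp w.r.t. a letter. -/
noncomputable def Rexp (I : α → α → Prop) (a : α) : RegularExpression α → RegularExpression α
  | zero => zero
  | epsilon => epsilon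
  | char b => if I a b then char b else zero
  | plus E F => plus (Rexp I a E) (Rexp I a F)
  | comp E F => comp (Rexp I a E) (Rexp I a F)
  | RegularExpression.star E => star (Rexp I a E)

/-- Brzozowski reordering derivative of a regexp along a letter. -/
noncomputable def Dexp (I : α → α → Prop) (a : α) : RegularExpression α → RegularExpression α
  | zero => zero
  | epsilon => zero
  | char b => if a = b then epsilon else zero
  | plus E F => plus (Dexp I a E) (Dexp I a F)
  | comp E F => plus (comp (Dexp I a E) F) (comp (Rexp I a E) (Dexp I a F))
  | RegularExpression.star E => comp (star (Rexp I a E)) (comp (Dexp I a E) (star E))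

/-- Syntactic reorderable part along a word. -/
noncomputable def RexpW (I : α → α → Prop) (u : List α) (E : RegularExpression α) :
    RegularExpression α :=
  u.foldl (fun E a => Rexp I a E) E

/-- Brzozowski reordering derivative along a word. -/
noncomputable def DexpW (I : α → α → Prop) (u : List α) (E : RegularExpression α) :
    RegularExpression α :=
  u.foldl (fun E a => Dexp I a E) E

/-- Antimirov reordering parts-of-derivatives along a letter. -/
inductive Antim (I : α → α → Prop) : RegularExpression α → α → RegularExpression α → Prop
  | chr (a : α) : Antim I (char a) a epsilon
  | plusL {E F : RegularExpression α} {a E'} : Antim I E a E' → Antim I (plus E F) a E'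
  | plusR {E F : RegularExpression α} {a F'} : Antim I F a F' → Antim I (plus E F) a F'
  | compL {E F : RegularExpression α} {a E'} : Antim I E a E' → Antim I (comp E F) a (comp E' F)
  | compR {E F : RegularExpression α} {a F'} :
      Antim I F a F' → Antim I (comp E F) a (comp (Rexp I a E) F')
  | st {E : RegularExpression α} {a E'} :
      Antim I E a E' → Antim I (star E) a (comp (star (Rexp I a E)) (comp E' (star E)))

/-- Antimirov reordering parts-of-derivatives along a word. -/
inductive AntimW (I : α → α → Prop) : RegularExpression α → List α → RegularExpression α → Prop
  | nil (E : RegularExpression α) : AntimW I E [] E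
  | snoc {E : RegularExpression α} {u E' a E''} :
      AntimW I E u E' → Antim I E' a E'' → AntimW I E (u ++ [a]) E''

/-- The dependence graph of a word: vertices are positions; distinct positions
are adjacent when their letters are not independent. -/
def depGraph (I : α → α → Prop) (w : List α) : SimpleGraph (Fin w.length) where
  Adj i j := i ≠ j ∧ ¬(I (w.get i) (w.get j) ∧ I (w.get j) (w.get i))
  symm := by
    constructor
    intro i j h
    exact ⟨h.1.symm, fun hc => h.2 ⟨hc.2, hc.1⟩⟩
  loopless := by
    constructor
    intro i h
    exact h.1 rfl

/-- A word is connected if its dependence graph is connected. -/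
def WordConnected (I : α → α → Prop) (w : List α) : Prop :=
  (depGraph I w).Preconnected

/-- Least fixed point star for the trace-closing semantics. -/
def starI (I : α → α → Prop) (L : Set (List α)) : Set (List α) :=
  sInf {X | {([] : List α)} ∪ rconcL I L X ⊆ X}

/-- Trace-closing semantics of regular expressions. -/
def langI (I : α → α → Prop) : RegularExpression α → Set (List α)
  | zero => ∅
  | epsilon => {[]}
  | char a => {[a]}
  | plus E F => langI I E ∪ langI I F
  | comp E F => rconcL I (langI I E) (langI I F)
  | RegularExpression.star E => starI I (langI I E)

/-- L has (scattering) rank at most N. -/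
def HasRankLe (I : α → α → Prop) (L : Set (List α)) (N : ℕ) : Prop :=
  ∀ u v, u ++ v ∈ TrClosure I L → ∃ z ∈ L, EqScatEqLe I N u z v

/-- L has uniform (scattering) rank at most N. -/
def HasUniformRankLe (I : α → α → Prop) (L : Set (List α)) (N : ℕ) : Prop :=
  ∀ w ∈ TrClosure I L, ∃ z ∈ L, ∀ u v, w = u ++ v → EqScatEqLe I N u z v

/-- Star-connected regular expressions. -/
inductive StarConnected (I : α → α → Prop) : RegularExpression α → Prop
  | zero : StarConnected I zero
  | epsilon : StarConnected I epsilon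
  | chr (a : α) : StarConnected I (char a)
  | plus {E F : RegularExpression α} :
      StarConnected I E → StarConnected I F → StarConnected I (plus E F)
  | comp {E F : RegularExpression α} :
      StarConnected I E → StarConnected I F → StarConnected I (comp E F)
  | st {E : RegularExpression α} :
      StarConnected I E → (∀ w ∈ E.matches', WordConnected I w) → StarConnected I (star E)

/-- Refined Antimirov reordering parts-of-derivatives along a letter. -/
inductive RAntim (I : α → α → Prop) :
    RegularExpression α → α → RegularExpression α → RegularExpression α → Prop
  | chr (a : α) : RAntim I (char a) a epsilon epsilon
  | plusL {E F : RegularExpression α} {a El Er} :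
      RAntim I E a El Er → RAntim I (plus E F) a El Er
  | plusR {E F : RegularExpression α} {a Fl Fr} :
      RAntim I F a Fl Fr → RAntim I (plus E F) a Fl Fr
  | compL {E F : RegularExpression α} {a El Er} :
      RAntim I E a El Er → RAntim I (comp E F) a El (comp Er F)
  | compR {E F : RegularExpression α} {a Fl Fr} :
      RAntim I F a Fl Fr → RAntim I (comp E F) a (comp (Rexp I a E) Fl) Fr
  | st {E : RegularExpression α} {a El Er} :
      RAntim I E a El Er →
      RAntim I (star E) a (comp (star (Rexp I a E)) El) (comp Er (star E))

/-- Refined Antimirov relation lifted to nonempty lists of regexps (unbounded). -/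
inductive RAntimL (I : α → α → Prop) :
    List (RegularExpression α) → α → List (RegularExpression α) → Prop
  | split {Γ Δ : List (RegularExpression α)} {E : RegularExpression α} {a El Er} :
      RAntim I E a El Er →
      RAntimL I (Γ ++ E :: Δ) a (Γ.map (Rexp I a) ++ El :: Er :: Δ)
  | dropL {Γ Δ : List (RegularExpression α)} {E : RegularExpression α} {a El Er} :
      RAntim I E a El Er → [] ∈ El.matches' → Γ ≠ [] →
      RAntimL I (Γ ++ E :: Δ) a (Γ.map (Rexp I a) ++ Er :: Δ)
  | dropR {Γ Δ : List (RegularExpression α)} {E : RegularExpression α} {a El Er} :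
      RAntim I E a El Er → [] ∈ Er.matches' → Δ ≠ [] →
      RAntimL I (Γ ++ E :: Δ) a (Γ.map (Rexp I a) ++ El :: Δ)
  | dropBoth {Γ Δ : List (RegularExpression α)} {E : RegularExpression α} {a El Er} :
      RAntim I E a El Er → [] ∈ El.matches' → [] ∈ Er.matches' → Γ ≠ [] → Δ ≠ [] →
      RAntimL I (Γ ++ E :: Δ) a (Γ.map (Rexp I a) ++ Δ)

/-- Refined Antimirov relation along a word (unbounded). -/
inductive RAntimW (I : α → α → Prop) :
    RegularExpression α → List α → List (RegularExpression α) → Prop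
  | nil (E : RegularExpression α) : RAntimW I E [] [E]
  | snoc {E : RegularExpression α} {u Γ a Γ'} :
      RAntimW I E u Γ → RAntimL I Γ a Γ' → RAntimW I E (u ++ [a]) Γ'

/-- N-bounded refined Antimirov relation lifted to nonempty lists of regexps. -/
inductive RAntimLN (I : α → α → Prop) (N : ℕ) :
    List (RegularExpression α) → α → List (RegularExpression α) → Prop
  | split {Γ Δ : List (RegularExpression α)} {E : RegularExpression α} {a El Er} :
      RAntim I E a El Er → Γ.length + Δ.length < N →
      RAntimLN I N (Γ ++ E :: Δ) a (Γ.map (Rexp I a) ++ El :: Er :: Δ)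
  | dropL {Γ Δ : List (RegularExpression α)} {E : RegularExpression α} {a El Er} :
      RAntim I E a El Er → [] ∈ El.matches' → Γ ≠ [] →
      RAntimLN I N (Γ ++ E :: Δ) a (Γ.map (Rexp I a) ++ Er :: Δ)
  | dropR {Γ Δ : List (RegularExpression α)} {E : RegularExpression α} {a El Er} :
      RAntim I E a El Er → [] ∈ Er.matches' → Δ ≠ [] →
      RAntimLN I N (Γ ++ E :: Δ) a (Γ.map (Rexp I a) ++ El :: Δ)
  | dropBoth {Γ Δ : List (RegularExpression α)} {E : RegularExpression α} {a El Er} :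
      RAntim I E a El Er → [] ∈ El.matches' → [] ∈ Er.matches' → Γ ≠ [] → Δ ≠ [] →
      RAntimLN I N (Γ ++ E :: Δ) a (Γ.map (Rexp I a) ++ Δ)

/-- N-bounded refined Antimirov relation along a word. -/
inductive RAntimWN (I : α → α → Prop) (N : ℕ) :
    RegularExpression α → List α → List (RegularExpression α) → Prop
  | nil (E : RegularExpression α) : RAntimWN I N E [] [E]
  | snoc {E : RegularExpression α} {u Γ a Γ'} :
      RAntimWN I N E u Γ → RAntimLN I N Γ a Γ' → RAntimWN I N E (u ++ [a]) Γ'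


section Aux
open List

/-- `a` is independent from every letter of `w`. -/
def RIndep (I : α → α → Prop) (a : α) (w : List α) : Prop := ∀ b ∈ w, I a b

theorem RIndep.append {I : α → α → Prop} {a : α} {u v : List α}
    (h1 : RIndep I a u) (h2 : RIndep I a v) : RIndep I a (u ++ v) := by
  intro b hb; rcases mem_append.mp hb with h | h
  · exact h1 b h
  · exact h2 b h

theorem RIndep.sub {I : α → α → Prop} {a : α} {u v : List α}
    (h1 : RIndep I a u) (h : ∀ b ∈ v, b ∈ u) : RIndep I a v := fun b hb => h1 b (h b hb)

theorem TrEq.perm {I : α → α → Prop} {u v : List α} (h : TrEq I u v) : u.Perm v := by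
  induction h with
  | @swap x y a b hab => simpa [List.append_assoc] using (List.Perm.swap b a y).append_left x
  | refl u => exact .refl u
  | symm _ ih => exact ih.symm
  | trans _ _ ih1 ih2 => exact ih1.trans ih2

theorem treq_append_right {I : α → α → Prop} {u v : List α} (h : TrEq I u v) (w : List α) :
    TrEq I (u ++ w) (v ++ w) := by
  induction h with
  | @swap x y a b hab => simpa [List.append_assoc] using TrEq.swap (I := I) x (y ++ w) hab
  | refl u => exact .refl _
  | symm _ ih => exact .symm ih
  | trans _ _ ih1 ih2 => exact .trans ih1 ih2

theorem treq_append_left {I : α → α → Prop} {u v : List α} (w : List α) (h : TrEq I u v) :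
    TrEq I (w ++ u) (w ++ v) := by
  induction h with
  | @swap x y a b hab => simpa [List.append_assoc] using TrEq.swap (I := I) (w ++ x) y hab
  | refl u => exact .refl _
  | symm _ ih => exact .symm ih
  | trans _ _ ih1 ih2 => exact .trans ih1 ih2

theorem treq_append {I : α → α → Prop} {u v u' v' : List α}
    (h1 : TrEq I u u') (h2 : TrEq I v v') : TrEq I (u ++ v) (u' ++ v') :=
  .trans (treq_append_right h1 v) (treq_append_left u' h2)

theorem treq_cons {I : α → α → Prop} (a : α) {u v : List α} (h : TrEq I u v) :
    TrEq I (a :: u) (a :: v) := by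
  simpa using treq_append_left [a] h

theorem treq_move {I : α → α → Prop} (hsym : Symmetric I) {a : α} {w : List α}
    (h : RIndep I a w) : TrEq I (w ++ [a]) (a :: w) := by
  induction w with
  | nil => exact .refl _
  | cons c w ih =>
    have h1 : TrEq I (c :: (w ++ [a])) (c :: (a :: w)) :=
      treq_cons c (ih fun b hb => h b (by simp [hb]))
    have h2 : TrEq I (c :: a :: w) (a :: c :: w) := by
      simpa using TrEq.swap (I := I) [] w (hsym (h c (by simp)))
    exact .trans h1 h2

theorem treq_of_eq {I : α → α → Prop} {u v : List α} (h : u = v) : TrEq I u v := h ▸ .refl u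

theorem treq_cast {I : α → α → Prop} {u v u' v' : List α} (hu : u = u') (hv : v = v')
    (h : TrEq I u v) : TrEq I u' v' := hu ▸ hv ▸ h

theorem extract_swap {I : α → α → Prop} {X Y : List α} {b c : α} (hbc : I b c) :
    ∀ {a : α} {x y : List α}, X ++ [c, b] ++ Y = x ++ a :: y → RIndep I a y →
    ∃ x' y', X ++ [b, c] ++ Y = x' ++ a :: y' ∧ RIndep I a y' ∧ TrEq I (x' ++ y') (x ++ y) := by
  intro a x y heq hy
  rcases List.append_eq_append_iff.mp
    (show X ++ ([c, b] ++ Y) = x ++ (a :: y) by simpa [List.append_assoc] using heq) with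
    ⟨m, hx, hm⟩ | ⟨m, hX, hm⟩
  · rcases m with _ | ⟨c', m'⟩
    · -- c :: b :: Y = a :: y
      simp only [List.nil_append, List.cons.injEq] at hm
      obtain ⟨rfl, rfl⟩ := hm
      simp only [List.append_nil] at hx
      refine ⟨X ++ [b], Y, by simp, fun d hd => hy d (by simp [hd]), ?_⟩
      exact treq_of_eq (by simp [hx])
    · rcases m' with _ | ⟨b', m''⟩
      · -- c :: b :: Y = c' :: a :: y
        simp only [List.cons_append, List.nil_append, List.cons.injEq] at hm
        obtain ⟨rfl, rfl, rfl⟩ := hm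
        refine ⟨X, c :: Y, by simp, ?_, treq_of_eq (by simp [hx])⟩
        intro d hd
        rcases List.mem_cons.mp hd with rfl | hd
        · exact hbc
        · exact hy d hd
      · -- c :: b :: Y = c' :: b' :: (m'' ++ a :: y)
        simp only [List.cons_append, List.cons.injEq] at hm
        obtain ⟨rfl, rfl, rfl⟩ := hm
        refine ⟨X ++ b :: c :: m'', y, by simp, hy, ?_⟩
        exact treq_cast (by simp [List.append_assoc]) (by simp [hx, List.append_assoc])
          (TrEq.swap (I := I) X (m'' ++ y) hbc)
  · rcases m with _ | ⟨a', m'⟩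
    · -- a :: y = c :: b :: Y
      simp only [List.nil_append, List.cons.injEq] at hm
      obtain ⟨rfl, rfl⟩ := hm
      simp only [List.append_nil] at hX
      refine ⟨X ++ [b], Y, by simp [hX], fun d hd => hy d (by simp [hd]), ?_⟩
      exact treq_of_eq (by simp [hX])
    · -- a :: y = a' :: (m' ++ [c,b] ++ Y)
      simp only [List.cons_append, List.cons.injEq, List.append_assoc] at hm
      obtain ⟨rfl, rfl⟩ := hm
      refine ⟨x, m' ++ [b, c] ++ Y, by simp [hX, List.append_assoc], ?_, ?_⟩
      · intro d hd
        apply hy d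
        simp only [List.append_assoc, List.mem_append, List.mem_cons] at hd ⊢
        tauto
      · exact treq_cast (by simp [List.append_assoc]) (by simp [List.append_assoc])
          (TrEq.swap (I := I) (x ++ m') Y hbc)

theorem treq_extract {I : α → α → Prop} (hsym : Symmetric I) {v w : List α} (h : TrEq I v w) :
    (∀ a x y, w = x ++ a :: y → RIndep I a y →
      ∃ x' y', v = x' ++ a :: y' ∧ RIndep I a y' ∧ TrEq I (x' ++ y') (x ++ y)) ∧
    (∀ a x y, v = x ++ a :: y → RIndep I a y →
      ∃ x' y', w = x' ++ a :: y' ∧ RIndep I a y' ∧ TrEq I (x' ++ y') (x ++ y)) := by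
  induction h with
  | @swap X Y p q hpq =>
    constructor
    · intro a x y heq hy
      exact extract_swap (I := I) hpq heq hy
    · intro a x y heq hy
      exact extract_swap (I := I) (hsym hpq) heq hy
  | refl u =>
    exact ⟨fun a x y heq hy => ⟨x, y, heq, hy, .refl _⟩,
           fun a x y heq hy => ⟨x, y, heq, hy, .refl _⟩⟩
  | symm _ ih => exact ⟨ih.2, ih.1⟩
  | @trans u v' w' h1 h2 ih1 ih2 =>
    constructor
    · intro a x y heq hy
      obtain ⟨x2, y2, heq2, hy2, ht2⟩ := ih2.1 a x y heq hy
      obtain ⟨x1, y1, heq1, hy1, ht1⟩ := ih1.1 a x2 y2 heq2 hy2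
      exact ⟨x1, y1, heq1, hy1, ht1.trans ht2⟩
    · intro a x y heq hy
      obtain ⟨x2, y2, heq2, hy2, ht2⟩ := ih1.2 a x y heq hy
      obtain ⟨x1, y1, heq1, hy1, ht1⟩ := ih2.2 a x2 y2 heq2 hy2
      exact ⟨x1, y1, heq1, hy1, ht1.trans ht2⟩

theorem matches'_plus (P Q : RegularExpression α) :
    (RegularExpression.plus P Q).matches' = P.matches' + Q.matches' := matches'_add P Q

theorem matches'_comp (P Q : RegularExpression α) :
    (RegularExpression.comp P Q).matches' = P.matches' * Q.matches' := matches'_mul P Q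

theorem matches'_eps : (RegularExpression.epsilon : RegularExpression α).matches' = 1 :=
  matches'_epsilon

theorem matches'_zero' : (RegularExpression.zero : RegularExpression α).matches' = 0 :=
  matches'_zero

theorem mem_Rexp {I : α → α → Prop} {a : α} :
    ∀ (G : RegularExpression α) {w : List α},
      w ∈ (Rexp I a G).matches' ↔ w ∈ G.matches' ∧ RIndep I a w := by
  intro G
  induction G with
  | zero => intro w; simp [Rexp, matches'_zero']
  | epsilon =>
    intro w
    simp only [Rexp, matches'_eps, Language.mem_one]
    constructor
    · rintro rfl; exact ⟨rfl, by intro b hb; simp at hb⟩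
    · rintro ⟨rfl, -⟩; rfl
  | char b =>
    intro w
    simp only [Rexp]
    split_ifs with hI
    · simp only [matches'_char, Set.mem_singleton_iff]
      constructor
      · rintro rfl
        refine ⟨rfl, ?_⟩
        intro d hd; rcases List.mem_singleton.mp hd with rfl; exact hI
      · rintro ⟨rfl, -⟩; rfl
    · rw [matches'_zero']
      simp only [matches'_char, Set.mem_singleton_iff]
      constructor
      · intro h; exact absurd h (Language.notMem_zero w)
      · rintro ⟨rfl, h⟩; exact absurd (h b (by simp)) hI
  | plus E F ihE ihF =>
    intro w
    simp only [Rexp, matches'_plus, Language.mem_add, ihE, ihF]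
    tauto
  | comp E F ihE ihF =>
    intro w
    simp only [Rexp, matches'_comp]
    constructor
    · rintro h
      rcases Language.mem_mul.mp h with ⟨e, he, f, hf, rfl⟩
      rcases ihE.mp he with ⟨he1, he2⟩
      rcases ihF.mp hf with ⟨hf1, hf2⟩
      exact ⟨Language.mem_mul.mpr ⟨e, he1, f, hf1, rfl⟩, he2.append hf2⟩
    · rintro ⟨h, hind⟩
      rcases Language.mem_mul.mp h with ⟨e, he, f, hf, rfl⟩
      refine Language.mem_mul.mpr ⟨e, ihE.mpr ⟨he, ?_⟩, f, ihF.mpr ⟨hf, ?_⟩, rfl⟩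
      · exact hind.sub (fun d hd => by simp [hd])
      · exact hind.sub (fun d hd => by simp [hd])
  | star E ihE =>
    intro w
    simp only [Rexp, matches'_star, Language.mem_kstar]
    constructor
    · rintro ⟨L, rfl, hL⟩
      constructor
      · exact ⟨L, rfl, fun y hy => (ihE.mp (hL y hy)).1⟩
      · intro d hd
        rcases List.mem_flatten.mp hd with ⟨l, hl, hdl⟩
        exact (ihE.mp (hL l hl)).2 d hdl
    · rintro ⟨⟨L, rfl, hL⟩, hind⟩
      refine ⟨L, rfl, fun y hy => ihE.mpr ⟨hL y hy, ?_⟩⟩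
      exact hind.sub (fun d hd => List.mem_flatten.mpr ⟨y, hy, hd⟩)

theorem rantim_sound {I : α → α → Prop} {G : RegularExpression α} {a : α}
    {El Er : RegularExpression α} (h : RAntim I G a El Er) :
    ∀ {wl wr : List α}, wl ∈ El.matches' → wr ∈ Er.matches' →
      (wl ++ a :: wr) ∈ G.matches' ∧ RIndep I a wl := by
  induction h with
  | chr b =>
    intro wl wr h1 h2
    rw [matches'_eps, Language.mem_one] at h1 h2
    subst h1; subst h2
    constructor
    · rw [matches'_char]; rfl
    · intro d hd; simp at hd
  | plusL h ih =>
    intro wl wr h1 h2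
    obtain ⟨hm, hi⟩ := ih h1 h2
    exact ⟨by rw [matches'_plus]; exact (Language.mem_add _ _ _).mpr (Or.inl hm), hi⟩
  | plusR h ih =>
    intro wl wr h1 h2
    obtain ⟨hm, hi⟩ := ih h1 h2
    exact ⟨by rw [matches'_plus]; exact (Language.mem_add _ _ _).mpr (Or.inr hm), hi⟩
  | @compL E F _ _ _ h ih =>
    intro wl wr h1 h2
    rw [matches'_comp] at h2
    rcases Language.mem_mul.mp h2 with ⟨er, her, f, hf, rfl⟩
    obtain ⟨hm, hi⟩ := ih h1 her
    refine ⟨?_, hi⟩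
    rw [matches'_comp]
    exact Language.mem_mul.mpr ⟨wl ++ _ :: er, hm, f, hf, by simp⟩
  | @compR E F _ _ _ h ih =>
    intro wl wr h1 h2
    rw [matches'_comp] at h1
    rcases Language.mem_mul.mp h1 with ⟨e, he, fl, hfl, rfl⟩
    rcases (mem_Rexp _).mp he with ⟨he1, he2⟩
    obtain ⟨hm, hi⟩ := ih hfl h2
    constructor
    · rw [matches'_comp]
      exact Language.mem_mul.mpr ⟨e, he1, fl ++ _ :: wr, hm, by simp⟩
    · exact he2.append hi
  | @st E a0 El0 Er0 h ih =>
    intro wl wr h1 h2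
    rw [matches'_comp] at h1 h2
    rcases Language.mem_mul.mp h1 with ⟨s, hs, el, hel, rfl⟩
    rcases Language.mem_mul.mp h2 with ⟨er, her, t, ht, rfl⟩
    rw [matches'_star, Language.mem_kstar] at hs ht
    rcases hs with ⟨L1, rfl, hL1⟩
    rcases ht with ⟨L2, rfl, hL2⟩
    obtain ⟨hm, hi⟩ := ih hel her
    constructor
    · rw [matches'_star, Language.mem_kstar]
      refine ⟨L1 ++ (el ++ a0 :: er) :: L2, by simp [List.append_assoc], ?_⟩
      intro y hy
      rcases List.mem_append.mp hy with hy | hy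
      · exact ((mem_Rexp _).mp (hL1 y hy)).1
      · rcases List.mem_cons.mp hy with rfl | hy
        · exact hm
        · exact hL2 y hy
    · refine RIndep.append ?_ hi
      intro d hd
      rcases List.mem_flatten.mp hd with ⟨l, hl, hdl⟩
      exact ((mem_Rexp _).mp (hL1 l hl)).2 d hdl

theorem flatten_locate {S : List (List α)} {x y : List α} {a : α}
    (h : S.flatten = x ++ a :: y) :
    ∃ S1 x2 y2 S2, S = S1 ++ (x2 ++ a :: y2) :: S2 ∧
      x = S1.flatten ++ x2 ∧ y = y2 ++ S2.flatten := by
  induction S generalizing x with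
  | nil => simp at h
  | cons w S ih =>
    rw [List.flatten_cons] at h
    rcases List.append_eq_append_iff.mp h with ⟨m, hx, hm⟩ | ⟨m, hw, hm⟩
    · obtain ⟨S1, x2, y2, S2, rfl, rfl, rfl⟩ := ih hm
      exact ⟨w :: S1, x2, y2, S2, by simp, by simp [hx, List.append_assoc], rfl⟩
    · rcases m with _ | ⟨a', m'⟩
      · simp only [List.nil_append] at hm
        obtain ⟨S1, x2, y2, S2, rfl, hx2, rfl⟩ := ih (x := []) (by simpa using hm.symm)
        refine ⟨w :: S1, x2, y2, S2, by simp, ?_, rfl⟩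
        rw [List.flatten_cons, List.append_assoc, ← hx2, List.append_nil]
        simp only [List.append_nil] at hw
        exact hw.symm
      · simp only [List.cons_append, List.cons.injEq] at hm
        obtain ⟨rfl, rfl⟩ := hm
        exact ⟨[], x, m', S, by simp [hw], by simp, rfl⟩

theorem rantim_complete {I : α → α → Prop} {a : α} :
    ∀ (G : RegularExpression α) {x y : List α},
      (x ++ a :: y) ∈ G.matches' → RIndep I a x →
      ∃ El Er, RAntim I G a El Er ∧ x ∈ El.matches' ∧ y ∈ Er.matches' := by
  intro G
  induction G with
  | zero =>
    intro x y h _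
    rw [matches'_zero'] at h
    exact absurd h (Language.notMem_zero _)
  | epsilon =>
    intro x y h _
    rw [matches'_eps, Language.mem_one] at h
    exact absurd h (by simp)
  | char b =>
    intro x y h _
    rw [matches'_char] at h
    have h' : x ++ a :: y = [b] := h
    rcases x with _ | ⟨c, x'⟩
    · simp only [List.nil_append, List.cons.injEq] at h'
      obtain ⟨rfl, rfl⟩ := h'
      refine ⟨RegularExpression.epsilon, RegularExpression.epsilon, RAntim.chr a, ?_, ?_⟩ <;>
        (rw [matches'_eps]; exact (Language.mem_one _).mpr rfl)
    · simp only [List.cons_append, List.cons.injEq] at h'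
      exact absurd h'.2 (by simp)
  | plus E F ihE ihF =>
    intro x y h hind
    rw [matches'_plus] at h
    rcases (Language.mem_add _ _ _).mp h with h | h
    · obtain ⟨El, Er, hA, h1, h2⟩ := ihE h hind
      exact ⟨El, Er, RAntim.plusL hA, h1, h2⟩
    · obtain ⟨Fl, Fr, hA, h1, h2⟩ := ihF h hind
      exact ⟨Fl, Fr, RAntim.plusR hA, h1, h2⟩
  | comp E F ihE ihF =>
    intro x y h hind
    rw [matches'_comp] at h
    rcases Language.mem_mul.mp h with ⟨e, he, f, hf, heq⟩
    rcases List.append_eq_append_iff.mp heq.symm with ⟨m, he', hm⟩ | ⟨m, hx, hm⟩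
    · -- e = x ++ m, a :: y = m ++ f
      rcases m with _ | ⟨a', m'⟩
      · simp only [List.nil_append] at hm he'
        obtain ⟨Fl, Fr, hA, h1, h2⟩ := ihF (x := []) (y := y)
          (by simp only [List.nil_append]; rw [hm]; exact hf) (fun d hd => by simp at hd)
        refine ⟨RegularExpression.comp (Rexp I a E) Fl, Fr, RAntim.compR hA, ?_, h2⟩
        rw [matches'_comp]
        refine Language.mem_mul.mpr ⟨x, (mem_Rexp _).mpr ⟨?_, hind⟩, [], h1, by simp⟩
        rw [he', List.append_nil] at he
        exact he
      · simp only [List.cons_append, List.cons.injEq] at hm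
        obtain ⟨rfl, rfl⟩ := hm
        obtain ⟨El, Er, hA, h1, h2⟩ := ihE (he' ▸ he) hind
        refine ⟨El, RegularExpression.comp Er F, RAntim.compL hA, h1, ?_⟩
        rw [matches'_comp]
        exact Language.mem_mul.mpr ⟨m', h2, f, hf, rfl⟩
    · -- x = e ++ m, f = m ++ a :: y
      obtain ⟨Fl, Fr, hA, h1, h2⟩ := ihF (hm ▸ hf) (hind.sub (fun d hd => by simp [hx, hd]))
      refine ⟨RegularExpression.comp (Rexp I a E) Fl, Fr, RAntim.compR hA, ?_, h2⟩
      rw [matches'_comp]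
      refine Language.mem_mul.mpr ⟨e, (mem_Rexp _).mpr ⟨he, ?_⟩, m, h1, hx.symm⟩
      exact hind.sub (fun d hd => by simp [hx, hd])
  | star E ihE =>
    intro x y h hind
    rw [matches'_star, Language.mem_kstar] at h
    rcases h with ⟨L, hL, hmem⟩
    obtain ⟨S1, x2, y2, S2, rfl, rfl, rfl⟩ := flatten_locate hL.symm
    obtain ⟨El, Er, hA, h1, h2⟩ := ihE (x := x2) (y := y2)
      (hmem (x2 ++ a :: y2) (by simp)) (hind.sub (fun d hd => by simp [hd]))
    refine ⟨RegularExpression.comp (RegularExpression.star (Rexp I a E)) El,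
      RegularExpression.comp Er (RegularExpression.star E), RAntim.st hA, ?_, ?_⟩
    · rw [matches'_comp]
      refine Language.mem_mul.mpr ⟨S1.flatten, ?_, x2, h1, rfl⟩
      rw [matches'_star, Language.mem_kstar]
      refine ⟨S1, rfl, fun l hl => (mem_Rexp _).mpr ⟨hmem l (by simp [hl]), ?_⟩⟩
      exact hind.sub (fun d hd => by simp [List.mem_flatten.mpr ⟨l, hl, hd⟩])
    · rw [matches'_comp]
      refine Language.mem_mul.mpr ⟨y2, h2, S2.flatten, ?_, rfl⟩
      rw [matches'_star, Language.mem_kstar]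
      exact ⟨S2, rfl, fun l hl => hmem l (by simp [hl])⟩



/-- Interleaving decompositions: gaps `gs`, blocks `us`, whole word `z`,
with each gap independent from all later blocks. -/
inductive Dcmp (I : α → α → Prop) : List (List α) → List (List α) → List α → Prop
  | single (g : List α) : Dcmp I [g] [] g
  | cons (g u : List α) {gs us : List (List α)} {z : List α} :
      u ≠ [] → (∀ b ∈ g, ∀ c ∈ u ++ us.flatten, I b c) →
      Dcmp I gs us z → Dcmp I (g :: gs) (u :: us) (g ++ u ++ z)

theorem dcmp_cast {I : α → α → Prop} {gs gs' us us' : List (List α)} {z z' : List α}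
    (hgs : gs = gs') (hus : us = us') (hz : z = z') (h : Dcmp I gs us z) :
    Dcmp I gs' us' z' := hgs ▸ hus ▸ hz ▸ h

theorem dcmp_gs_ne {I : α → α → Prop} {gs us : List (List α)} {z : List α}
    (h : Dcmp I gs us z) : gs ≠ [] := by cases h <;> simp

theorem dcmp_len {I : α → α → Prop} {gs us : List (List α)} {z : List α}
    (h : Dcmp I gs us z) : gs.length = us.length + 1 := by
  induction h with
  | single g => rfl
  | cons g u hu hc hd ih => simpa using ih

theorem dcmp_blocks_ne {I : α → α → Prop} {gs us : List (List α)} {z : List α}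
    (h : Dcmp I gs us z) : ∀ w ∈ us, w ≠ [] := by
  induction h with
  | single g => simp
  | cons g u hu hc hd ih =>
    intro w hw
    rcases List.mem_cons.mp hw with rfl | hw
    · exact hu
    · exact ih w hw

theorem dcmp_inv {I : α → α → Prop} {g : List α} {gs us : List (List α)} {z : List α}
    (h : Dcmp I (g :: gs) us z) :
    (gs = [] ∧ us = [] ∧ z = g) ∨
    ∃ u us₂ z₂, us = u :: us₂ ∧ z = g ++ u ++ z₂ ∧ u ≠ [] ∧
      (∀ b ∈ g, ∀ c ∈ u ++ us₂.flatten, I b c) ∧ Dcmp I gs us₂ z₂ := by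
  cases h with
  | single g => exact Or.inl ⟨rfl, rfl, rfl⟩
  | cons g u hu hc hd => exact Or.inr ⟨u, _, _, rfl, rfl, hu, hc, hd⟩

theorem dcmp_cons_inv {I : α → α → Prop} {g : List α} {gs us : List (List α)} {z : List α}
    (h : Dcmp I (g :: gs) us z) (hne : gs ≠ []) :
    ∃ u us₂ z₂, us = u :: us₂ ∧ z = g ++ u ++ z₂ ∧ u ≠ [] ∧
      (∀ b ∈ g, ∀ c ∈ u ++ us₂.flatten, I b c) ∧ Dcmp I gs us₂ z₂ := by
  rcases dcmp_inv h with ⟨h1, -, -⟩ | h2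
  · exact absurd h1 hne
  · exact h2

theorem dcmp_nil_inv {I : α → α → Prop} {gs : List (List α)} {z : List α}
    (h : Dcmp I gs [] z) : gs = [z] := by
  cases h; rfl

theorem dcmp_two {I : α → α → Prop} {us : List (List α)} {z : List α}
    (h : Dcmp I [[], []] us z) : ∃ u1, us = [u1] ∧ z = u1 := by
  rcases dcmp_inv h with ⟨h1, -, -⟩ | ⟨u, us₂, z₂, rfl, rfl, hu, hc, hd⟩
  · simp at h1
  · rcases dcmp_inv hd with ⟨-, rfl, rfl⟩ | ⟨u₂, us₃, z₃, -, -, -, -, hd₂⟩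
    · exact ⟨u, rfl, by simp⟩
    · exact absurd rfl (dcmp_gs_ne hd₂)

/-- middle gaps are nonempty -/
def Inr (gs : List (List α)) : Prop :=
  ∀ A g B, gs = A ++ g :: B → A ≠ [] → B ≠ [] → g ≠ []

theorem inr_tail {x : List α} {gs : List (List α)} (h : Inr (x :: gs)) : Inr gs :=
  fun A g B hE hA hB => h (x :: A) g B (by simp [hE]) (by simp) hB

theorem inr_second {g h : List α} {t : List (List α)} (hi : Inr (g :: h :: t))
    (ht : t ≠ []) : h ≠ [] := hi [g] h t rfl (by simp) ht

theorem inr_replace {ws1 ws2 : List (List α)} {g h : List α}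
    (hi : Inr (ws1 ++ g :: ws2)) (hh : h ≠ []) : Inr (ws1 ++ h :: ws2) := by
  intro A k B hE hA hB
  rcases List.append_eq_append_iff.mp hE.symm with ⟨m, hw, hm⟩ | ⟨m, hA', hm⟩
  · -- ws1 = A ++ m, k :: B = m ++ h :: ws2
    rcases m with _ | ⟨k', m'⟩
    · simp only [List.nil_append, List.cons.injEq] at hm
      obtain ⟨rfl, -⟩ := hm
      exact hh
    · simp only [List.cons_append, List.cons.injEq] at hm
      obtain ⟨rfl, hm⟩ := hm
      exact hi A k (m' ++ g :: ws2) (by simp [hw, List.append_assoc]) hA (by simp)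
  · -- A = ws1 ++ m, h :: ws2 = m ++ k :: B
    rcases m with _ | ⟨h', m'⟩
    · simp only [List.nil_append, List.cons.injEq] at hm
      obtain ⟨rfl, -⟩ := hm
      exact hh
    · simp only [List.cons_append, List.cons.injEq] at hm
      obtain ⟨rfl, hm⟩ := hm
      exact hi (ws1 ++ g :: m') k B (by simp [hm, List.append_assoc]) (by simp) hB

theorem inr_merge {ws1 ws2 : List (List α)} {g g' h : List α}
    (hi : Inr (ws1 ++ g :: g' :: ws2)) (hh : h ≠ []) : Inr (ws1 ++ h :: ws2) := by
  intro A k B hE hA hB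
  rcases List.append_eq_append_iff.mp hE.symm with ⟨m, hw, hm⟩ | ⟨m, hA', hm⟩
  · rcases m with _ | ⟨k', m'⟩
    · simp only [List.nil_append, List.cons.injEq] at hm
      obtain ⟨rfl, -⟩ := hm
      exact hh
    · simp only [List.cons_append, List.cons.injEq] at hm
      obtain ⟨rfl, hm⟩ := hm
      exact hi A k (m' ++ g :: g' :: ws2) (by simp [hw, List.append_assoc]) hA (by simp)
  · rcases m with _ | ⟨h', m'⟩
    · simp only [List.nil_append, List.cons.injEq] at hm
      obtain ⟨rfl, -⟩ := hm
      exact hh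
    · simp only [List.cons_append, List.cons.injEq] at hm
      obtain ⟨rfl, hm⟩ := hm
      exact hi (ws1 ++ g :: g' :: m') k B (by simp [hm, List.append_assoc]) (by simp) hB

theorem inr_insert {ws1 ws2 : List (List α)} {h : List α}
    (hi : Inr (ws1 ++ ws2)) (hh : h ≠ []) (h1 : ws1 ≠ []) (h2 : ws2 ≠ []) :
    Inr (ws1 ++ h :: ws2) := by
  intro A k B hE hA hB
  rcases List.append_eq_append_iff.mp hE.symm with ⟨m, hw, hm⟩ | ⟨m, hA', hm⟩
  · rcases m with _ | ⟨k', m'⟩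
    · simp only [List.nil_append, List.cons.injEq] at hm
      obtain ⟨rfl, -⟩ := hm
      exact hh
    · simp only [List.cons_append, List.cons.injEq] at hm
      obtain ⟨rfl, hm⟩ := hm
      exact hi A k (m' ++ ws2) (by simp [hw, List.append_assoc]) hA (by simp [h2])
  · rcases m with _ | ⟨h', m'⟩
    · simp only [List.nil_append, List.cons.injEq] at hm
      obtain ⟨rfl, -⟩ := hm
      exact hh
    · simp only [List.cons_append, List.cons.injEq] at hm
      obtain ⟨rfl, hm⟩ := hm
      exact hi (ws1 ++ m') k B (by simp [hm, List.append_assoc]) (by simp [h1]) hB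

theorem dcmp_unique {I : α → α → Prop} (hirr : Irreflexive I) :
    ∀ {gs us z}, Dcmp I gs us z → ∀ {gs' us' z'}, Dcmp I gs' us' z' → z = z' →
      Inr gs → Inr gs' → us.flatten.Perm us'.flatten → gs = gs' ∧ us = us' := by
  intro gs us z h1
  induction h1 with
  | single g =>
    intro gs' us' z' h2 hz _ _ hperm
    cases h2 with
    | single g' => exact ⟨by rw [hz], rfl⟩
    | @cons g' u' gs1' us1' z1' hu' hcr' hd' =>
      exfalso
      have h0 : u' ++ us1'.flatten = [] := by
        simpa using hperm.symm.eq_nil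
      rcases List.append_eq_nil_iff.mp h0 with ⟨h, -⟩
      exact hu' h
  | @cons g u gs1 us1 z1 hu hcr hd ih =>
    intro gs' us' z' h2 hz hin hin' hperm
    cases h2 with
    | single g' =>
      exfalso
      have h0 : u ++ us1.flatten = [] := by
        simpa using hperm.eq_nil
      rcases List.append_eq_nil_iff.mp h0 with ⟨h, -⟩
      exact hu h
    | @cons g' u' gs1' us1' z1' hu' hcr' hd' =>
      simp only [List.flatten_cons] at hperm
      have hgg : g = g' := by
        rcases List.append_eq_append_iff.mp
          (show g ++ (u ++ z1) = g' ++ (u' ++ z1') by simpa [List.append_assoc] using hz) with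
          ⟨d, hg', hd2⟩ | ⟨d, hg2, hd2⟩
        · -- g' = g ++ d, u ++ z1 = d ++ (u' ++ z1')
          rcases d with _ | ⟨c, d'⟩
          · simpa using hg'.symm
          · exfalso
            rcases u with _ | ⟨c₂, u₂⟩
            · exact hu rfl
            · have hcc : c₂ = c := by
                have := congrArg List.head? hd2
                simpa using this
              subst hcc
              have hmem : c₂ ∈ u' ++ us1'.flatten :=
                hperm.mem_iff.mp (by simp)
              exact hirr c₂ (hcr' c₂ (by simp [hg']) c₂ hmem)
        · -- g = g' ++ d, u' ++ z1' = d ++ (u ++ z1)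
          rcases d with _ | ⟨c, d'⟩
          · simpa using hg2
          · exfalso
            rcases u' with _ | ⟨c₂, u₂'⟩
            · exact hu' rfl
            · have hcc : c₂ = c := by
                have := congrArg List.head? hd2
                simpa using this
              subst hcc
              have hmem : c₂ ∈ u ++ us1.flatten :=
                hperm.mem_iff.mpr (by simp)
              exact hirr c₂ (hcr c₂ (by simp [hg2]) c₂ hmem)
      subst hgg
      have hz' : g ++ (u ++ z1) = g ++ (u' ++ z1') := by
        simpa [List.append_assoc] using hz
      have hz2 : u ++ z1 = u' ++ z1' := List.append_cancel_left hz'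
      have huu : u = u' := by
        rcases List.append_eq_append_iff.mp hz2 with ⟨e, hu'e, he⟩ | ⟨e, hue, he⟩
        · -- u' = u ++ e, z1 = e ++ z1'
          rcases e with _ | ⟨c, e'⟩
          · simpa using hu'e.symm
          · exfalso
            have hperm2 : us1.flatten.Perm ((c :: e') ++ us1'.flatten) := by
              have : (u ++ us1.flatten).Perm (u ++ ((c :: e') ++ us1'.flatten)) := by
                refine hperm.trans (List.Perm.of_eq ?_)
                simp [hu'e, List.append_assoc]
              exact (List.perm_append_left_iff u).mp this
            have hcmem : c ∈ us1.flatten := hperm2.mem_iff.mpr (by simp)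
            cases hd with
            | single g₂ => simp at hcmem
            | @cons g₂ u₂ gs₂ us₂ z₂ hu₂ hcr₂ hd₂ =>
              have hg₂ne : g₂ ≠ [] := inr_second hin (dcmp_gs_ne hd₂)
              rcases g₂ with _ | ⟨c₃, g₂'⟩
              · exact hg₂ne rfl
              · have hcc : c₃ = c := by
                  have := congrArg List.head? he
                  simpa using this
                subst hcc
                simp only [List.flatten_cons] at hcmem
                exact hirr c₃ (hcr₂ c₃ (by simp) c₃ hcmem)
        · -- u = u' ++ e, z1' = e ++ z1
          rcases e with _ | ⟨c, e'⟩
          · simpa using hue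
          · exfalso
            have hperm2 : ((c :: e') ++ us1.flatten).Perm us1'.flatten := by
              have : (u' ++ ((c :: e') ++ us1.flatten)).Perm (u' ++ us1'.flatten) := by
                refine (List.Perm.of_eq ?_).trans hperm
                simp [hue, List.append_assoc]
              exact (List.perm_append_left_iff u').mp this
            have hcmem : c ∈ us1'.flatten := hperm2.mem_iff.mp (by simp)
            cases hd' with
            | single g₂ => simp at hcmem
            | @cons g₂ u₂ gs₂ us₂ z₂ hu₂ hcr₂ hd₂ =>
              have hg₂ne : g₂ ≠ [] := inr_second hin' (dcmp_gs_ne hd₂)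
              rcases g₂ with _ | ⟨c₃, g₂'⟩
              · exact hg₂ne rfl
              · have hcc : c₃ = c := by
                  have := congrArg List.head? he
                  simpa using this
                subst hcc
                simp only [List.flatten_cons] at hcmem
                exact hirr c₃ (hcr₂ c₃ (by simp) c₃ hcmem)
      subst huu
      have hz3 : z1 = z1' := List.append_cancel_left hz2
      have hperm2 : us1.flatten.Perm us1'.flatten := (List.perm_append_left_iff u).mp hperm
      obtain ⟨e1, e2⟩ := ih hd' hz3 (inr_tail hin) (inr_tail hin') hperm2
      exact ⟨by rw [e1], by rw [e2]⟩

/-- Local rewrite of the gap list when letter `a` is read. -/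
inductive GStep (I : α → α → Prop) (a : α) : List (List α) → List (List α) → Prop
  | split (ws1 ws2 : List (List α)) (wl wr : List α) :
      (∀ w ∈ ws1, RIndep I a w) → RIndep I a wl →
      GStep I a (ws1 ++ (wl ++ a :: wr) :: ws2) (ws1 ++ wl :: wr :: ws2)
  | dropL (ws1 ws2 : List (List α)) (wr : List α) :
      (∀ w ∈ ws1, RIndep I a w) → ws1 ≠ [] →
      GStep I a (ws1 ++ (a :: wr) :: ws2) (ws1 ++ wr :: ws2)
  | dropR (ws1 ws2 : List (List α)) (wl : List α) :
      (∀ w ∈ ws1, RIndep I a w) → RIndep I a wl → ws2 ≠ [] →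
      GStep I a (ws1 ++ (wl ++ [a]) :: ws2) (ws1 ++ wl :: ws2)
  | dropBoth (ws1 ws2 : List (List α)) :
      (∀ w ∈ ws1, RIndep I a w) → ws1 ≠ [] → ws2 ≠ [] →
      GStep I a (ws1 ++ [a] :: ws2) (ws1 ++ ws2)

theorem gstep_cast {I : α → α → Prop} {a : α} {g1 g1' g2 g2' : List (List α)}
    (h1 : g1 = g1') (h2 : g2 = g2') (h : GStep I a g1 g2) : GStep I a g1' g2' :=
  h1 ▸ h2 ▸ h

theorem gstep_cons {I : α → α → Prop} {a : α} {g : List α} {gs1 gs2 : List (List α)}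
    (h : GStep I a gs1 gs2) (hg : RIndep I a g) : GStep I a (g :: gs1) (g :: gs2) := by
  have hcons : ∀ ws1 : List (List α), ∀ w ∈ g :: ws1, RIndep I a w → True := fun _ _ _ _ => trivial
  cases h with
  | split ws1 ws2 wl wr hws hwl =>
    refine gstep_cast (g1 := (g :: ws1) ++ (wl ++ a :: wr) :: ws2) (by simp) (by simp)
      (GStep.split (g :: ws1) ws2 wl wr ?_ hwl)
    intro w hw
    rcases List.mem_cons.mp hw with rfl | hw
    · exact hg
    · exact hws w hw
  | dropL ws1 ws2 wr hws hne =>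
    refine gstep_cast (g1 := (g :: ws1) ++ (a :: wr) :: ws2) (by simp) (by simp)
      (GStep.dropL (g :: ws1) ws2 wr ?_ (by simp))
    intro w hw
    rcases List.mem_cons.mp hw with rfl | hw
    · exact hg
    · exact hws w hw
  | dropR ws1 ws2 wl hws hwl hne =>
    refine gstep_cast (g1 := (g :: ws1) ++ (wl ++ [a]) :: ws2) (by simp) (by simp)
      (GStep.dropR (g :: ws1) ws2 wl ?_ hwl hne)
    intro w hw
    rcases List.mem_cons.mp hw with rfl | hw
    · exact hg
    · exact hws w hw
  | dropBoth ws1 ws2 hws hne1 hne2 =>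
    refine gstep_cast (g1 := (g :: ws1) ++ [a] :: ws2) (by simp) (by simp)
      (GStep.dropBoth (g :: ws1) ws2 ?_ (by simp) hne2)
    intro w hw
    rcases List.mem_cons.mp hw with rfl | hw
    · exact hg
    · exact hws w hw

theorem inr_of_gstep {I : α → α → Prop} {a : α} {gsold gsnew : List (List α)}
    (h : GStep I a gsold gsnew) (hi : Inr gsnew) : Inr gsold := by
  cases h with
  | split ws1 ws2 wl wr _ _ => exact inr_merge hi (by simp)
  | dropL ws1 ws2 wr _ _ => exact inr_replace hi (by simp)
  | dropR ws1 ws2 wl _ _ _ => exact inr_replace hi (by simp)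
  | dropBoth ws1 ws2 _ h1 h2 => exact inr_insert hi (by simp) h1 h2

section Forall2
variable {β : Type u} {γ : Type (u+1)}

theorem f2_append {R : List α → RegularExpression α → Prop}
    {l1 l2 : List (List α)} {L1 L2 : List (RegularExpression α)}
    (h1 : List.Forall₂ R l1 L1) (h2 : List.Forall₂ R l2 L2) :
    List.Forall₂ R (l1 ++ l2) (L1 ++ L2) := by
  induction h1 with
  | nil => simpa using h2
  | cons hx hrest ih => exact List.Forall₂.cons hx ih

theorem f2_split_left {R : List α → RegularExpression α → Prop}
    {l1 l2 : List (List α)} {x : List α} {L : List (RegularExpression α)}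
    (h : List.Forall₂ R (l1 ++ x :: l2) L) :
    ∃ L1 X L2, L = L1 ++ X :: L2 ∧ List.Forall₂ R l1 L1 ∧ R x X ∧
      List.Forall₂ R l2 L2 ∧ L1.length = l1.length := by
  induction l1 generalizing L with
  | nil =>
    cases h with
    | cons hx hrest => exact ⟨[], _, _, rfl, List.Forall₂.nil, hx, hrest, rfl⟩
  | cons y l1 ih =>
    cases h with
    | cons hy hrest =>
      obtain ⟨L1, X, L2, rfl, hf1, hfx, hf2, hlen⟩ := ih hrest
      exact ⟨_ :: L1, X, L2, rfl, List.Forall₂.cons hy hf1, hfx, hf2, by simp [hlen]⟩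

theorem f2_split_right {R : List α → RegularExpression α → Prop}
    {l : List (List α)} {L1 L2 : List (RegularExpression α)} {X : RegularExpression α}
    (h : List.Forall₂ R l (L1 ++ X :: L2)) :
    ∃ l1 x l2, l = l1 ++ x :: l2 ∧ List.Forall₂ R l1 L1 ∧ R x X ∧
      List.Forall₂ R l2 L2 := by
  induction L1 generalizing l with
  | nil =>
    cases h with
    | cons hx hrest => exact ⟨[], _, _, rfl, List.Forall₂.nil, hx, hrest⟩
  | cons Y L1 ih =>
    cases h with
    | cons hy hrest =>
      obtain ⟨l1, xx, l2, rfl, hf1, hfx, hf2⟩ := ih hrest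
      exact ⟨_ :: l1, xx, l2, rfl, List.Forall₂.cons hy hf1, hfx, hf2⟩

theorem f2_split_app {R : List α → RegularExpression α → Prop}
    {l : List (List α)} {L1 L2 : List (RegularExpression α)}
    (h : List.Forall₂ R l (L1 ++ L2)) :
    ∃ l1 l2, l = l1 ++ l2 ∧ List.Forall₂ R l1 L1 ∧ List.Forall₂ R l2 L2 := by
  induction L1 generalizing l with
  | nil => exact ⟨[], l, rfl, List.Forall₂.nil, h⟩
  | cons Y L1 ih =>
    cases h with
    | cons hy hrest =>
      obtain ⟨l1, l2, rfl, hf1, hf2⟩ := ih hrest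
      exact ⟨_ :: l1, l2, rfl, List.Forall₂.cons hy hf1, hf2⟩
end Forall2

theorem forall2_rexp {I : α → α → Prop} {a : α} {ws : List (List α)}
    {Γ : List (RegularExpression α)}
    (h : List.Forall₂ (fun g G => g ∈ G.matches') ws Γ)
    (hind : ∀ w ∈ ws, RIndep I a w) :
    List.Forall₂ (fun g G => g ∈ G.matches') ws (Γ.map (Rexp I a)) := by
  induction h with
  | nil => exact List.Forall₂.nil
  | @cons w G ws' Γ' hx hrest ih =>
    exact List.Forall₂.cons ((mem_Rexp _).mpr ⟨hx, hind w (by simp)⟩)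
      (ih fun w hw => hind w (by simp [hw]))

theorem forall2_unrexp {I : α → α → Prop} {a : α} {ws : List (List α)}
    {Γ : List (RegularExpression α)}
    (h : List.Forall₂ (fun g G => g ∈ G.matches') ws (Γ.map (Rexp I a))) :
    List.Forall₂ (fun g G => g ∈ G.matches') ws Γ ∧ ∀ w ∈ ws, RIndep I a w := by
  have h' := List.forall₂_map_right_iff.mp h
  clear h
  induction h' with
  | nil => exact ⟨List.Forall₂.nil, by simp⟩
  | @cons w G ws' Γ' hx hrest ih =>
    obtain ⟨ih1, ih2⟩ := ih
    rcases (mem_Rexp _).mp hx with ⟨h1, h2⟩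
    refine ⟨List.Forall₂.cons h1 ih1, ?_⟩
    intro v hv
    rcases List.mem_cons.mp hv with rfl | hv
    · exact h2
    · exact ih2 v hv

theorem machine_step {I : α → α → Prop} {N : ℕ} {a : α} {Γ : List (RegularExpression α)}
    {gsold gsnew : List (List α)}
    (hf : List.Forall₂ (fun g G => g ∈ G.matches') gsold Γ)
    (hstep : GStep I a gsold gsnew) (hbound : gsnew.length ≤ N + 1) :
    ∃ Γ', RAntimLN I N Γ a Γ' ∧ List.Forall₂ (fun g G => g ∈ G.matches') gsnew Γ' := by
  cases hstep with
  | split ws1 ws2 wl wr hws hwl =>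
    obtain ⟨Γ1, G, Γ2, rfl, hf1, hfx, hf2, hlen⟩ := f2_split_left hf
    obtain ⟨El, Er, hA, h1, h2⟩ := rantim_complete G hfx hwl
    refine ⟨Γ1.map (Rexp I a) ++ El :: Er :: Γ2, RAntimLN.split hA ?_, ?_⟩
    · have hl1 := hf1.length_eq
      have hl2 := hf2.length_eq
      simp only [List.length_append, List.length_cons] at hbound
      omega
    · exact f2_append (forall2_rexp hf1 hws)
        (List.Forall₂.cons h1 (List.Forall₂.cons h2 hf2))
  | dropL ws1 ws2 wr hws hne =>
    obtain ⟨Γ1, G, Γ2, rfl, hf1, hfx, hf2, hlen⟩ := f2_split_left hf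
    obtain ⟨El, Er, hA, h1, h2⟩ := rantim_complete G (x := []) (y := wr) hfx
      (fun d hd => by simp at hd)
    refine ⟨Γ1.map (Rexp I a) ++ Er :: Γ2, RAntimLN.dropL hA h1 ?_, ?_⟩
    · intro hΓ1
      apply hne
      have := hf1.length_eq
      rw [hΓ1] at this
      exact List.eq_nil_of_length_eq_zero (by simpa using this)
    · exact f2_append (forall2_rexp hf1 hws) (List.Forall₂.cons h2 hf2)
  | dropR ws1 ws2 wl hws hwl hne =>
    obtain ⟨Γ1, G, Γ2, rfl, hf1, hfx, hf2, hlen⟩ := f2_split_left hf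
    obtain ⟨El, Er, hA, h1, h2⟩ := rantim_complete G (x := wl) (y := [])
      (by simpa using hfx) hwl
    refine ⟨Γ1.map (Rexp I a) ++ El :: Γ2, RAntimLN.dropR hA h2 ?_, ?_⟩
    · intro hΓ2
      apply hne
      have := hf2.length_eq
      rw [hΓ2] at this
      exact List.eq_nil_of_length_eq_zero (by simpa using this)
    · exact f2_append (forall2_rexp hf1 hws) (List.Forall₂.cons h1 hf2)
  | dropBoth ws1 ws2 hws hne1 hne2 =>
    obtain ⟨Γ1, G, Γ2, rfl, hf1, hfx, hf2, hlen⟩ := f2_split_left hf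
    obtain ⟨El, Er, hA, h1, h2⟩ := rantim_complete G (x := []) (y := [])
      (by simpa using hfx) (fun d hd => by simp at hd)
    refine ⟨Γ1.map (Rexp I a) ++ Γ2, RAntimLN.dropBoth hA h1 h2 ?_ ?_, ?_⟩
    · intro hΓ1
      apply hne1
      have := hf1.length_eq
      rw [hΓ1] at this
      exact List.eq_nil_of_length_eq_zero (by simpa using this)
    · intro hΓ2
      apply hne2
      have := hf2.length_eq
      rw [hΓ2] at this
      exact List.eq_nil_of_length_eq_zero (by simpa using this)
    · exact f2_append (forall2_rexp hf1 hws) hf2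

theorem machine_step_rev {I : α → α → Prop} (hsym : Symmetric I) {N : ℕ} {a : α}
    {Γ Γ' : List (RegularExpression α)} (h : RAntimLN I N Γ a Γ') :
    ∀ {gsnew : List (List α)}, List.Forall₂ (fun g G => g ∈ G.matches') gsnew Γ' →
    ∃ gsold, List.Forall₂ (fun g G => g ∈ G.matches') gsold Γ ∧ GStep I a gsold gsnew := by
  cases h with
  | @split Γ1 Γ2 G a' El Er hA hN =>
    intro gsnew hf
    obtain ⟨ws1, wl, rest, rfl, hf1, hl, hrest⟩ := f2_split_right hf
    cases hrest with
    | cons hr hrest2 =>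
      obtain ⟨hf1', hws1⟩ := forall2_unrexp hf1
      obtain ⟨hmem, hind⟩ := rantim_sound hA hl hr
      refine ⟨ws1 ++ (wl ++ a :: _) :: _, f2_append hf1' (List.Forall₂.cons hmem hrest2), ?_⟩
      exact GStep.split ws1 _ wl _ hws1 hind
  | @dropL Γ1 Γ2 G a' El Er hA hEl hne =>
    intro gsnew hf
    obtain ⟨ws1, wr, ws2, rfl, hf1, hr, hf2⟩ := f2_split_right hf
    obtain ⟨hf1', hws1⟩ := forall2_unrexp hf1
    obtain ⟨hmem, -⟩ := rantim_sound hA hEl hr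
    refine ⟨ws1 ++ (a :: wr) :: ws2, f2_append hf1' (List.Forall₂.cons (by simpa using hmem) hf2), ?_⟩
    refine GStep.dropL ws1 ws2 wr hws1 ?_
    intro hws
    apply hne
    have := hf1'.length_eq
    rw [hws] at this
    exact List.eq_nil_of_length_eq_zero (by simpa using this.symm)
  | @dropR Γ1 Γ2 G a' El Er hA hEr hne =>
    intro gsnew hf
    obtain ⟨ws1, wl, ws2, rfl, hf1, hl, hf2⟩ := f2_split_right hf
    obtain ⟨hf1', hws1⟩ := forall2_unrexp hf1
    obtain ⟨hmem, hind⟩ := rantim_sound hA hl hEr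
    refine ⟨ws1 ++ (wl ++ [a]) :: ws2, f2_append hf1' (List.Forall₂.cons (by simpa using hmem) hf2), ?_⟩
    refine GStep.dropR ws1 ws2 wl hws1 hind ?_
    intro hws
    apply hne
    have := hf2.length_eq
    rw [hws] at this
    exact List.eq_nil_of_length_eq_zero (by simpa using this.symm)
  | @dropBoth Γ1 Γ2 G a' El Er hA hEl hEr hne1 hne2 =>
    intro gsnew hf
    obtain ⟨ws1, ws2, rfl, hf1, hf2⟩ := f2_split_app hf
    obtain ⟨hf1', hws1⟩ := forall2_unrexp hf1
    obtain ⟨hmem, -⟩ := rantim_sound hA hEl hEr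
    refine ⟨ws1 ++ [a] :: ws2, f2_append hf1' (List.Forall₂.cons (by simpa using hmem) hf2), ?_⟩
    refine GStep.dropBoth ws1 ws2 hws1 ?_ ?_
    · intro hws
      apply hne1
      have := hf1'.length_eq
      rw [hws] at this
      exact List.eq_nil_of_length_eq_zero (by simpa using this.symm)
    · intro hws
      apply hne2
      have := hf2.length_eq
      rw [hws] at this
      exact List.eq_nil_of_length_eq_zero (by simpa using this.symm)

theorem dcmp_us_cons_inv {I : α → α → Prop} {gs us : List (List α)} {z u : List α}
    {us₂ : List (List α)} (h : Dcmp I gs us z) (hus : us = u :: us₂) :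
    ∃ g gs₂ z₂, gs = g :: gs₂ ∧ z = g ++ u ++ z₂ ∧ u ≠ [] ∧
      (∀ b ∈ g, ∀ c ∈ u ++ us₂.flatten, I b c) ∧ Dcmp I gs₂ us₂ z₂ := by
  cases h with
  | single g => simp at hus
  | cons g u' hu hcr hd =>
    simp only [List.cons.injEq] at hus
    obtain ⟨rfl, rfl⟩ := hus
    exact ⟨g, _, _, rfl, rfl, hu, hcr, hd⟩

theorem dcmp_ins_peel {I : α → α → Prop} (hsym : Symmetric I) {a : α} {g u : List α}
    {gs2 us2 us2' : List (List α)} {z2 X Y : List α}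
    (hg : RIndep I a g) (hu : u ≠ [])
    (hcr : ∀ b ∈ g, ∀ c ∈ u ++ us2.flatten, I b c)
    (hd : Dcmp I gs2 us2' z2)
    (hfl : us2.flatten = X ++ Y) (hfl' : us2'.flatten = X ++ a :: Y) :
    Dcmp I (g :: gs2) (u :: us2') (g ++ u ++ z2) := by
  refine Dcmp.cons g u hu ?_ hd
  intro b hb c hc
  rcases List.mem_append.mp hc with hc | hc
  · exact hcr b hb c (List.mem_append.mpr (Or.inl hc))
  · rw [hfl'] at hc
    rcases List.mem_append.mp hc with hc | hc
    · exact hcr b hb c (List.mem_append.mpr (Or.inr (by rw [hfl]; exact List.mem_append.mpr (Or.inl hc))))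
    · rcases List.mem_cons.mp hc with rfl | hc
      · exact hsym (hg b hb)
      · exact hcr b hb c (List.mem_append.mpr (Or.inr (by rw [hfl]; exact List.mem_append.mpr (Or.inr hc))))

theorem ins_split {I : α → α → Prop} (hsym : Symmetric I) {a : α} {wl wr : List α}
    (hwl : RIndep I a wl) :
    ∀ (ws1 : List (List α)), (∀ w ∈ ws1, RIndep I a w) →
      ∀ {ws2 us : List (List α)} {z : List α},
      Dcmp I (ws1 ++ (wl ++ a :: wr) :: ws2) us z →
      ∃ us' X Y, Dcmp I (ws1 ++ wl :: wr :: ws2) us' z ∧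
        us.flatten = X ++ Y ∧ us'.flatten = X ++ a :: Y ∧ RIndep I a Y := by
  intro ws1
  induction ws1 with
  | nil =>
    intro _ ws2 us z hd
    rcases dcmp_inv (show Dcmp I ((wl ++ a :: wr) :: ws2) us z by simpa using hd) with
      ⟨rfl, rfl, rfl⟩ | ⟨u, us₂, z₂, rfl, rfl, hu, hcr, hd₂⟩
    · have hD : Dcmp I [wl, wr] [[a]] (wl ++ [a] ++ wr) := by
        refine Dcmp.cons wl [a] (by simp) ?_ (Dcmp.single wr)
        intro b hb c hc
        simp only [List.flatten_nil, List.append_nil, List.mem_singleton] at hc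
        subst hc
        exact hsym (hwl b hb)
      exact ⟨[[a]], [], [], by simpa [List.append_assoc] using hD, by simp, by simp,
        fun c hc => absurd hc (by simp)⟩
    · have hinner : Dcmp I (wr :: ws2) (u :: us₂) (wr ++ u ++ z₂) :=
        Dcmp.cons wr u hu (fun b hb c hc => hcr b (by simp [hb]) c hc) hd₂
      have hout : Dcmp I (wl :: wr :: ws2) ([a] :: u :: us₂) (wl ++ [a] ++ (wr ++ u ++ z₂)) := by
        refine Dcmp.cons wl [a] (by simp) ?_ hinner
        intro b hb c hc
        simp only [List.flatten_cons] at hc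
        rcases List.mem_append.mp hc with hc | hc
        · simp only [List.mem_singleton] at hc
          subst hc
          exact hsym (hwl b hb)
        · exact hcr b (by simp [hb]) c hc
      refine ⟨[a] :: u :: us₂, [], u ++ us₂.flatten, ?_, by simp, by simp, ?_⟩
      · exact dcmp_cast (by simp) rfl (by simp [List.append_assoc]) hout
      · exact fun c hc => hcr a (by simp) c hc
  | cons w ws1' ih =>
    intro hws ws2 us z hd
    obtain ⟨u, us₂, z₂, rfl, rfl, hu, hcr, hd₂⟩ :=
      dcmp_cons_inv (show Dcmp I (w :: (ws1' ++ (wl ++ a :: wr) :: ws2)) us z by simpa using hd)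
        (by simp)
    obtain ⟨us₂', X, Y, hd', hfl, hfl', hY⟩ := ih (fun v hv => hws v (by simp [hv])) hd₂
    refine ⟨u :: us₂', u ++ X, Y, ?_, by simp [hfl, List.append_assoc],
      by simp [hfl', List.append_assoc], hY⟩
    exact dcmp_cast (by simp) rfl rfl
      (dcmp_ins_peel hsym (hws w (by simp)) hu hcr hd' hfl hfl')

theorem ins_dropL {I : α → α → Prop} (hsym : Symmetric I) {a : α} {wr : List α} :
    ∀ (ws1 : List (List α)), ws1 ≠ [] → (∀ w ∈ ws1, RIndep I a w) →
      ∀ {ws2 us : List (List α)} {z : List α},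
      Dcmp I (ws1 ++ (a :: wr) :: ws2) us z →
      ∃ us' X Y, Dcmp I (ws1 ++ wr :: ws2) us' z ∧
        us.flatten = X ++ Y ∧ us'.flatten = X ++ a :: Y ∧ RIndep I a Y := by
  intro ws1
  induction ws1 with
  | nil => intro h; exact absurd rfl h
  | cons w ws1' ih =>
    intro _ hws ws2 us z hd
    obtain ⟨u, us₂, z₂, rfl, rfl, hu, hcr, hd₂⟩ :=
      dcmp_cons_inv (show Dcmp I (w :: (ws1' ++ (a :: wr) :: ws2)) us z by simpa using hd)
        (by simp)
    rcases ws1' with _ | ⟨w2, ws1''⟩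
    · simp only [List.nil_append] at hd₂
      rcases dcmp_inv hd₂ with ⟨rfl, rfl, rfl⟩ | ⟨u₂, us₃, z₃, rfl, rfl, hu₂, hcr₂, hd₃⟩
      · have hD : Dcmp I [w, wr] [u ++ [a]] (w ++ (u ++ [a]) ++ wr) := by
          refine Dcmp.cons w (u ++ [a]) (by simp) ?_ (Dcmp.single wr)
          intro b hb c hc
          simp only [List.flatten_nil, List.append_nil, List.mem_append,
            List.mem_singleton] at hc
          rcases hc with hc | rfl
          · exact hcr b hb c (by simp [hc])
          · exact hsym (hws w (by simp) b hb)
        refine ⟨[u ++ [a]], u, [], ?_, by simp, by simp, fun c hc => absurd hc (by simp)⟩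
        exact dcmp_cast (by simp) rfl (by simp [List.append_assoc]) hD
      · have hinner : Dcmp I (wr :: ws2) (u₂ :: us₃) (wr ++ u₂ ++ z₃) :=
          Dcmp.cons wr u₂ hu₂ (fun b hb c hc => hcr₂ b (by simp [hb]) c hc) hd₃
        have hout : Dcmp I (w :: wr :: ws2) ((u ++ [a]) :: u₂ :: us₃)
            (w ++ (u ++ [a]) ++ (wr ++ u₂ ++ z₃)) := by
          refine Dcmp.cons w (u ++ [a]) (by simp) ?_ hinner
          intro b hb c hc
          simp only [List.flatten_cons, List.mem_append, List.mem_singleton] at hc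
          rcases hc with (hc | rfl) | hc
          · exact hcr b hb c (by simp [hc])
          · exact hsym (hws w (by simp) b hb)
          · refine hcr b hb c ?_
            simp only [List.flatten_cons, List.mem_append] at hc ⊢
            tauto
        refine ⟨(u ++ [a]) :: u₂ :: us₃, u, u₂ ++ us₃.flatten, ?_,
          by simp [List.append_assoc], by simp [List.append_assoc], ?_⟩
        · exact dcmp_cast (by simp) rfl (by simp [List.append_assoc]) hout
        · exact fun c hc => hcr₂ a (by simp) c hc
    · obtain ⟨us₂', X, Y, hd', hfl, hfl', hY⟩ :=
        ih (by simp) (fun v hv => hws v (by simp [hv])) hd₂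
      refine ⟨u :: us₂', u ++ X, Y, ?_, by simp [hfl, List.append_assoc],
        by simp [hfl', List.append_assoc], hY⟩
      exact dcmp_cast (by simp) rfl rfl
        (dcmp_ins_peel hsym (hws w (by simp)) hu hcr hd' hfl hfl')

theorem ins_dropR {I : α → α → Prop} (hsym : Symmetric I) {a : α} {wl : List α}
    (hwl : RIndep I a wl) :
    ∀ (ws1 : List (List α)), (∀ w ∈ ws1, RIndep I a w) →
      ∀ {ws2 us : List (List α)} {z : List α}, ws2 ≠ [] →
      Dcmp I (ws1 ++ (wl ++ [a]) :: ws2) us z →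
      ∃ us' X Y, Dcmp I (ws1 ++ wl :: ws2) us' z ∧
        us.flatten = X ++ Y ∧ us'.flatten = X ++ a :: Y ∧ RIndep I a Y := by
  intro ws1
  induction ws1 with
  | nil =>
    intro _ ws2 us z hne hd
    obtain ⟨u, us₂, z₂, rfl, rfl, hu, hcr, hd₂⟩ :=
      dcmp_cons_inv (show Dcmp I ((wl ++ [a]) :: ws2) us z by simpa using hd) hne
    have hout : Dcmp I (wl :: ws2) ((a :: u) :: us₂) (wl ++ (a :: u) ++ z₂) := by
      refine Dcmp.cons wl (a :: u) (by simp) ?_ hd₂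
      intro b hb c hc
      simp only [List.cons_append, List.mem_cons] at hc
      rcases hc with rfl | hc
      · exact hsym (hwl b hb)
      · exact hcr b (by simp [hb]) c hc
    refine ⟨(a :: u) :: us₂, [], u ++ us₂.flatten, ?_, by simp, by simp, ?_⟩
    · exact dcmp_cast (by simp) rfl (by simp [List.append_assoc]) hout
    · exact fun c hc => hcr a (by simp) c hc
  | cons w ws1' ih =>
    intro hws ws2 us z hne hd
    obtain ⟨u, us₂, z₂, rfl, rfl, hu, hcr, hd₂⟩ :=
      dcmp_cons_inv (show Dcmp I (w :: (ws1' ++ (wl ++ [a]) :: ws2)) us z by simpa using hd)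
        (by simp)
    obtain ⟨us₂', X, Y, hd', hfl, hfl', hY⟩ :=
      ih (fun v hv => hws v (by simp [hv])) hne hd₂
    refine ⟨u :: us₂', u ++ X, Y, ?_, by simp [hfl, List.append_assoc],
      by simp [hfl', List.append_assoc], hY⟩
    exact dcmp_cast (by simp) rfl rfl
      (dcmp_ins_peel hsym (hws w (by simp)) hu hcr hd' hfl hfl')

theorem ins_dropBoth {I : α → α → Prop} (hsym : Symmetric I) {a : α} :
    ∀ (ws1 : List (List α)), ws1 ≠ [] → (∀ w ∈ ws1, RIndep I a w) →
      ∀ {ws2 us : List (List α)} {z : List α}, ws2 ≠ [] →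
      Dcmp I (ws1 ++ [a] :: ws2) us z →
      ∃ us' X Y, Dcmp I (ws1 ++ ws2) us' z ∧
        us.flatten = X ++ Y ∧ us'.flatten = X ++ a :: Y ∧ RIndep I a Y := by
  intro ws1
  induction ws1 with
  | nil => intro h; exact absurd rfl h
  | cons w ws1' ih =>
    intro _ hws ws2 us z hne hd
    obtain ⟨u, us₂, z₂, rfl, rfl, hu, hcr, hd₂⟩ :=
      dcmp_cons_inv (show Dcmp I (w :: (ws1' ++ [a] :: ws2)) us z by simpa using hd)
        (by simp)
    rcases ws1' with _ | ⟨w2, ws1''⟩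
    · simp only [List.nil_append] at hd₂
      obtain ⟨u₂, us₃, z₃, rfl, rfl, hu₂, hcr₂, hd₃⟩ := dcmp_cons_inv hd₂ hne
      have hout : Dcmp I (w :: ws2) ((u ++ a :: u₂) :: us₃) (w ++ (u ++ a :: u₂) ++ z₃) := by
        refine Dcmp.cons w (u ++ a :: u₂) (by simp) ?_ hd₃
        intro b hb c hc
        simp only [List.mem_append, List.mem_cons] at hc
        rcases hc with (hc | rfl | hc) | hc
        · exact hcr b hb c (by simp [hc])
        · exact hsym (hws w (by simp) b hb)
        · exact hcr b hb c (by simp [hc])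
        · exact hcr b hb c (by simp [hc])
      refine ⟨(u ++ a :: u₂) :: us₃, u, u₂ ++ us₃.flatten, ?_,
        by simp [List.append_assoc], by simp [List.append_assoc], ?_⟩
      · exact dcmp_cast (by simp) rfl (by simp [List.append_assoc]) hout
      · exact fun c hc => hcr₂ a (by simp) c hc
    · obtain ⟨us₂', X, Y, hd', hfl, hfl', hY⟩ :=
        ih (by simp) (fun v hv => hws v (by simp [hv])) hne hd₂
      refine ⟨u :: us₂', u ++ X, Y, ?_, by simp [hfl, List.append_assoc],
        by simp [hfl', List.append_assoc], hY⟩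
      exact dcmp_cast (by simp) rfl rfl
        (dcmp_ins_peel hsym (hws w (by simp)) hu hcr hd' hfl hfl')

theorem dcmp_ins {I : α → α → Prop} (hsym : Symmetric I) {a : α}
    {gsold gsnew : List (List α)} (hstep : GStep I a gsold gsnew)
    {us : List (List α)} {z : List α} (hd : Dcmp I gsold us z) :
    ∃ us' X Y, Dcmp I gsnew us' z ∧
      us.flatten = X ++ Y ∧ us'.flatten = X ++ a :: Y ∧ RIndep I a Y := by
  cases hstep with
  | split ws1 ws2 wl wr hws hwl => exact ins_split hsym hwl ws1 hws hd
  | dropL ws1 ws2 wr hws hne => exact ins_dropL hsym ws1 hne hws hd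
  | dropR ws1 ws2 wl hws hwl hne => exact ins_dropR hsym hwl ws1 hws hne hd
  | dropBoth ws1 ws2 hws h1 h2 => exact ins_dropBoth hsym ws1 h1 hws h2 hd

theorem dcmp_rem {I : α → α → Prop} (hsym : Symmetric I) {a : α} :
    ∀ (U1 : List (List α)) {gs us : List (List α)} {z : List α} {x2 y2 : List α}
      {U2 : List (List α)},
      Dcmp I gs us z → us = U1 ++ (x2 ++ a :: y2) :: U2 →
      RIndep I a (y2 ++ U2.flatten) →
      ∃ gsold usold, Dcmp I gsold usold z ∧
        usold.flatten = (U1.flatten ++ x2) ++ (y2 ++ U2.flatten) ∧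
        GStep I a gsold gs := by
  intro U1
  induction U1 with
  | nil =>
    intro gs us z x2 y2 U2 hd hus hind
    obtain ⟨g, gs₂, z₂, rfl, rfl, hu, hcr, hd₂⟩ :=
      dcmp_us_cons_inv hd (by simpa using hus)
    have hga : RIndep I a g := fun b hb => hsym (hcr b hb a (by simp))
    rcases x2 with _ | ⟨xc, xr⟩ <;> rcases y2 with _ | ⟨yc, yr⟩
    · -- x2 = [], y2 = []
      rcases U2 with _ | ⟨u₂, U2'⟩
      · have hg₂ := dcmp_nil_inv hd₂
        subst hg₂
        refine ⟨[g ++ a :: z₂], [], ?_, by simp, ?_⟩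
        · exact dcmp_cast rfl rfl (by simp) (Dcmp.single (g ++ a :: z₂))
        · exact gstep_cast (by simp) (by simp)
            (GStep.split [] [] g z₂ (by simp) hga)
      · obtain ⟨g₂, gs₃, z₃, rfl, rfl, hu₂, hcr₂, hd₃⟩ := dcmp_us_cons_inv hd₂ rfl
        refine ⟨(g ++ a :: g₂) :: gs₃, u₂ :: U2', ?_, by simp, ?_⟩
        · refine dcmp_cast rfl rfl (by simp [List.append_assoc])
            (Dcmp.cons (g ++ a :: g₂) u₂ hu₂ ?_ hd₃)
          intro b hb c hc
          simp only [List.mem_append, List.mem_cons] at hb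
          rcases hb with hb | rfl | hb
          · refine hcr b hb c ?_
            simp only [List.flatten_cons, List.nil_append, List.cons_append,
              List.mem_append, List.mem_cons] at hc ⊢
            tauto
          · exact hind c (by simpa using hc)
          · exact hcr₂ b hb c hc
        · exact gstep_cast (by simp) (by simp)
            (GStep.split [] gs₃ g g₂ (by simp) hga)
    · -- x2 = [], y2 = yc :: yr
      refine ⟨(g ++ [a]) :: gs₂, (yc :: yr) :: U2, ?_, by simp, ?_⟩
      · refine dcmp_cast rfl rfl (by simp [List.append_assoc])
          (Dcmp.cons (g ++ [a]) (yc :: yr) (by simp) ?_ hd₂)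
        intro b hb c hc
        simp only [List.mem_append, List.mem_singleton] at hb
        rcases hb with hb | rfl
        · refine hcr b hb c ?_
          simp only [List.flatten_cons, List.nil_append, List.cons_append,
            List.mem_append, List.mem_cons] at hc ⊢
          tauto
        · exact hind c (by simpa using hc)
      · exact gstep_cast (by simp) (by simp)
          (GStep.dropR [] gs₂ g (by simp) hga (dcmp_gs_ne hd₂))
    · -- x2 = xc :: xr, y2 = []
      rcases U2 with _ | ⟨u₂, U2'⟩
      · have hg₂ := dcmp_nil_inv hd₂
        subst hg₂
        refine ⟨[g, a :: z₂], [xc :: xr], ?_, by simp, ?_⟩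
        · refine dcmp_cast rfl rfl (by simp [List.append_assoc])
            (Dcmp.cons g (xc :: xr) (by simp) ?_ (Dcmp.single (a :: z₂)))
          intro b hb c hc
          simp only [List.flatten_nil, List.append_nil, List.mem_cons] at hc ⊢
          refine hcr b hb c ?_
          simp only [List.cons_append, List.mem_cons, List.mem_append,
            List.mem_singleton]
          tauto
        · exact gstep_cast (by simp) (by simp)
            (GStep.dropL [g] [] z₂ (by simpa using hga) (by simp))
      · obtain ⟨g₂, gs₃, z₃, rfl, rfl, hu₂, hcr₂, hd₃⟩ := dcmp_us_cons_inv hd₂ rfl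
        refine ⟨g :: (a :: g₂) :: gs₃, (xc :: xr) :: u₂ :: U2', ?_, by simp, ?_⟩
        · refine dcmp_cast rfl rfl (by simp [List.append_assoc])
            (Dcmp.cons g (xc :: xr) (by simp) ?_
              (Dcmp.cons (a :: g₂) u₂ hu₂ ?_ hd₃))
          · intro b hb c hc
            refine hcr b hb c ?_
            simp only [List.flatten_cons, List.mem_append, List.mem_cons] at hc ⊢
            tauto
          · intro b hb c hc
            rcases List.mem_cons.mp hb with rfl | hb
            · exact hind c (by simpa using hc)
            · exact hcr₂ b hb c hc
        · exact gstep_cast (by simp) (by simp)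
            (GStep.dropL [g] gs₃ g₂ (by simpa using hga) (by simp))
    · -- x2 = xc :: xr, y2 = yc :: yr
      refine ⟨g :: [a] :: gs₂, (xc :: xr) :: (yc :: yr) :: U2, ?_, by simp, ?_⟩
      · refine dcmp_cast rfl rfl (by simp [List.append_assoc])
          (Dcmp.cons g (xc :: xr) (by simp) ?_
            (Dcmp.cons [a] (yc :: yr) (by simp) ?_ hd₂))
        · intro b hb c hc
          refine hcr b hb c ?_
          simp only [List.flatten_cons, List.mem_append, List.mem_cons] at hc ⊢
          tauto
        · intro b hb c hc
          simp only [List.mem_singleton] at hb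
          subst hb
          exact hind c (by simpa using hc)
      · exact gstep_cast (by simp) (by simp)
          (GStep.dropBoth [g] gs₂ (by simpa using hga) (by simp) (dcmp_gs_ne hd₂))
  | cons w1 U1' ih =>
    intro gs us z x2 y2 U2 hd hus hind
    obtain ⟨g, gs₂, z₂, rfl, rfl, hu, hcr, hd₂⟩ :=
      dcmp_us_cons_inv hd (by simpa using hus)
    obtain ⟨gsold₂, usold₂, hd', hfl, hstep₂⟩ := ih hd₂ rfl hind
    have hamem : a ∈ (U1' ++ (x2 ++ a :: y2) :: U2).flatten :=
      List.mem_flatten.mpr ⟨x2 ++ a :: y2, by simp, by simp⟩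
    have hga : RIndep I a g :=
      fun b hb => hsym (hcr b hb a (List.mem_append.mpr (Or.inr hamem)))
    refine ⟨g :: gsold₂, w1 :: usold₂, Dcmp.cons g w1 hu ?_ hd', ?_,
      gstep_cons hstep₂ hga⟩
    · intro b hb c hc
      rcases List.mem_append.mp hc with hc | hc
      · exact hcr b hb c (by simp [hc])
      · refine hcr b hb c (List.mem_append.mpr (Or.inr ?_))
        rw [hfl] at hc
        simp only [List.flatten_append, List.flatten_cons, List.mem_append,
          List.mem_cons] at hc ⊢
        tauto
    · simp [hfl, List.append_assoc]

theorem inr_small {gs : List (List α)} (h : gs.length ≤ 2) : Inr gs := by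
  intro A g B hE hA hB
  exfalso
  rcases A with _ | ⟨a0, A⟩
  · exact hA rfl
  rcases B with _ | ⟨b0, B⟩
  · exact hB rfl
  have := congrArg List.length hE
  simp only [List.length_append, List.length_cons] at this
  omega

theorem scat_dcmp_aux {I : α → α → Prop} :
    ∀ (n : ℕ) (us vs : ℕ → List α),
    (∀ i, 1 ≤ i → i ≤ n → us i ≠ []) →
    (∀ i j, 1 ≤ i → i ≤ n → j < i → WIndep I (vs j) (us i)) →
    Dcmp I (vs 0 :: (List.range n).map (fun i => vs (i + 1)))
      ((List.range n).map (fun i => us (i + 1)))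
      (vs 0 ++ ((List.range n).map (fun i => us (i + 1) ++ vs (i + 1))).flatten) := by
  intro n
  induction n with
  | zero => intro us vs _ _; simpa using Dcmp.single (vs 0)
  | succ n ih =>
    intro us vs hne hind
    have tail := ih (fun i => us (i + 1)) (fun i => vs (i + 1))
      (fun i h1 h2 => hne (i + 1) (by omega) (by omega))
      (fun i j h1 h2 hj => hind (i + 1) (j + 1) (by omega) (by omega) (by omega))
    have hcross : ∀ b ∈ vs 0,
        ∀ c ∈ us 1 ++ ((List.range n).map (fun i => us (i + 1 + 1))).flatten, I b c := by
      intro b hb c hc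
      rcases List.mem_append.mp hc with hc | hc
      · exact hind 1 0 (by omega) (by omega) (by omega) b hb c hc
      · rcases List.mem_flatten.mp hc with ⟨l, hl, hcl⟩
        rcases List.mem_map.mp hl with ⟨i, hi, rfl⟩
        exact hind (i + 1 + 1) 0 (by omega) (by simpa using List.mem_range.mp hi) (by omega)
          b hb c hcl
    have hD := Dcmp.cons (vs 0) (us 1) (hne 1 (by omega) (by omega)) hcross tail
    refine dcmp_cast ?_ ?_ ?_ hD
    · rw [List.range_succ_eq_map, List.map_cons, List.map_map]
      rfl
    · rw [List.range_succ_eq_map, List.map_cons, List.map_map]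
      rfl
    · rw [List.range_succ_eq_map, List.map_cons, List.map_map, List.flatten_cons]
      simp [Function.comp_def, List.append_assoc]

theorem scat_to_dcmp {I : α → α → Prop} {n : ℕ} {u z v : List α} (h : ScatN I n u z v) :
    ∃ gs us', Dcmp I gs us' z ∧ us'.length = n ∧ us'.flatten = u ∧ gs.flatten = v ∧ Inr gs := by
  obtain ⟨us, vs, hbne, hgne, hu, hv, hz, hind⟩ := h
  refine ⟨vs 0 :: (List.range n).map (fun i => vs (i + 1)),
    (List.range n).map (fun i => us (i + 1)), ?_, by simp, hu.symm, ?_, ?_⟩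
  · exact dcmp_cast rfl rfl hz.symm (scat_dcmp_aux n us vs hbne hind)
  · rw [hv, List.range_succ_eq_map, List.map_cons, List.map_map, List.flatten_cons]
    rfl
  · intro A g B hE hA hB
    rcases A with _ | ⟨a0, A'⟩
    · exact absurd rfl hA
    simp only [List.cons_append, List.cons.injEq] at hE
    obtain ⟨rfl, h2⟩ := hE
    have hlenB : 1 ≤ B.length := by
      rcases B with _ | ⟨b0, B⟩
      · exact absurd rfl hB
      · simp
    have hlen : A'.length + 1 + B.length = n := by
      have := congrArg List.length h2
      simp only [List.length_map, List.length_range, List.length_append,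
        List.length_cons] at this
      omega
    have hbound : A'.length < n := by omega
    have h3 : ((List.range n).map (fun i => vs (i + 1)))[A'.length]? = some g := by
      rw [h2, List.getElem?_append_right (Nat.le_refl _)]
      simp
    rw [List.getElem?_map, List.getElem?_range hbound] at h3
    simp only [Option.map_some] at h3
    have hg : vs (A'.length + 1) = g := by
      injection h3
    rw [← hg]
    exact hgne (A'.length + 1) (by omega) (by omega)

theorem machine_sound {I : α → α → Prop} (hsym : Symmetric I) {N : ℕ}
    {E : RegularExpression α} :
    ∀ {p : List α} {Γ}, RAntimWN I N E p Γ →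
      ∀ {gs}, List.Forall₂ (fun g G => g ∈ G.matches') gs Γ →
      ∃ us z, Dcmp I gs us z ∧ z ∈ E.matches' ∧ TrEq I p us.flatten := by
  intro p Γ h
  induction h with
  | nil =>
    intro gs hf
    cases hf with
    | cons hg hf2 =>
      cases hf2
      exact ⟨[], _, Dcmp.single _, hg, treq_of_eq (by simp)⟩
  | @snoc p' Γ a Γ' hrun hstepL ih =>
    intro gs' hf'
    obtain ⟨gsold, hfold, hgstep⟩ := machine_step_rev hsym hstepL hf'
    obtain ⟨us, z, hd, hz, ht⟩ := ih hfold
    obtain ⟨us', X, Y, hd', hfl, hfl', hYind⟩ := dcmp_ins hsym hgstep hd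
    refine ⟨us', z, hd', hz, ?_⟩
    have h1 : TrEq I (p' ++ [a]) ((X ++ Y) ++ [a]) :=
      treq_append_right (treq_cast rfl hfl ht) [a]
    have h2 : TrEq I ((X ++ Y) ++ [a]) (X ++ a :: Y) :=
      treq_cast (by simp [List.append_assoc]) rfl
        (treq_append_left X (treq_move hsym hYind))
    exact treq_cast rfl hfl'.symm (h1.trans h2)
/-- the N-truncated refined Antimirov automaton accepts the trace closure
when ⟦E⟧ has uniform rank at most N. -/
theorem stmt19 {α : Type u} [Fintype α] (I : α → α → Prop)
    (hirr : Irreflexive I) (hsym : Symmetric I) (E : RegularExpression α) (N : ℕ)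
    (hrank : HasUniformRankLe I E.matches' N) (u : List α) :
    u ∈ TrClosure I E.matches' ↔
      (u = [] ∧ [] ∈ E.matches') ∨
      (u ≠ [] ∧ ∃ E0 E1, RAntimWN I N E u [E0, E1] ∧
        [] ∈ E0.matches' ∧ [] ∈ E1.matches') := by
  constructor
  · intro hu
    by_cases hnil : u = []
    · subst hnil
      left
      obtain ⟨z, hz, ht⟩ := hu
      have hz0 : z = [] := ht.perm.symm.eq_nil
      exact ⟨rfl, hz0 ▸ hz⟩
    · right
      refine ⟨hnil, ?_⟩
      obtain ⟨z, hz, hall⟩ := hrank u hu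
      have key : ∀ t, t ≤ u.length → ∃ Γ gs us,
          RAntimWN I N E (u.take t) Γ ∧ Dcmp I gs us z ∧ Inr gs ∧
          TrEq I us.flatten (u.take t) ∧ TrEq I gs.flatten (u.drop t) ∧
          List.Forall₂ (fun g G => g ∈ G.matches') gs Γ := by
        intro t
        induction t with
        | zero =>
          intro _
          obtain ⟨p', s', htp, ⟨n, hn, hscat⟩, hts⟩ := hall [] u (by simp)
          have hp' : p' = [] := htp.perm.symm.eq_nil
          subst hp'
          obtain ⟨gs1, us1, hd1, hlen1, hfl1, hgfl1, hinr1⟩ := scat_to_dcmp hscat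
          have hus1 : us1 = [] := by
            rcases us1 with _ | ⟨w, us1'⟩
            · rfl
            · exfalso
              have hw : w = [] := by
                simp only [List.flatten_cons] at hfl1
                exact (List.append_eq_nil_iff.mp hfl1).1
              exact dcmp_blocks_ne hd1 w (by simp) hw
          subst hus1
          have hgs1 := dcmp_nil_inv hd1
          subst hgs1
          refine ⟨[E], [z], [], RAntimWN.nil E, Dcmp.single z, inr_small (by simp), ?_, ?_, ?_⟩
          · exact treq_of_eq (by simp)
          · exact treq_cast hgfl1.symm (by simp) hts
          · exact List.Forall₂.cons hz List.Forall₂.nil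
        | succ t iht =>
          intro hle
          have ht : t < u.length := hle
          obtain ⟨Γ, gs, us, hrun, hd, hinr, htu, htg, hforall⟩ := iht (le_of_lt ht)
          have htake : u.take (t + 1) = u.take t ++ [u[t]] := by
            rw [← List.take_concat_get ht, List.concat_eq_append]
          obtain ⟨p', s', htp, ⟨n, hn, hscat⟩, hts⟩ :=
            hall (u.take (t + 1)) (u.drop (t + 1)) (List.take_append_drop _ u).symm
          obtain ⟨gs1, us1, hd1, hlen1, hfl1, hgfl1, hinr1⟩ := scat_to_dcmp hscat
          have hT : TrEq I p' (u.take t ++ u[t] :: []) := by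
            refine treq_cast rfl ?_ htp.symm
            simpa using htake
          obtain ⟨x, y, hp'eq, hyind, htxy⟩ :=
            (treq_extract hsym hT).1 (u[t]) (u.take t) [] rfl
              (fun b hb => absurd hb (by simp))
          obtain ⟨U1, x2, y2, U2, hus1, hxeq, hyeq⟩ := flatten_locate (hfl1.trans hp'eq)
          obtain ⟨gsold, usold, hdold, hflold, hgstep⟩ :=
            dcmp_rem hsym U1 hd1 hus1 (by rw [← hyeq]; exact hyind)
          have hperm : us.flatten.Perm usold.flatten := by
            have h1 : us.flatten.Perm (u.take t) := htu.perm
            have h2 : (x ++ y).Perm (u.take t) := by simpa using htxy.perm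
            have h3 : usold.flatten = x ++ y := by rw [hflold, ← hxeq, ← hyeq]
            rw [h3]
            exact h1.trans h2.symm
          obtain ⟨hgs, hus⟩ := dcmp_unique hirr hd hdold rfl hinr
            (inr_of_gstep hgstep hinr1) hperm
          have hbound : gs1.length ≤ N + 1 := by
            have := dcmp_len hd1
            omega
          obtain ⟨Γ', hstepM, hforall'⟩ := machine_step (hgs ▸ hforall) hgstep hbound
          refine ⟨Γ', gs1, us1, ?_, hd1, hinr1, ?_, ?_, hforall'⟩
          · rw [htake]
            exact RAntimWN.snoc hrun hstepM
          · exact treq_cast hfl1.symm rfl htp.symm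
          · exact treq_cast hgfl1.symm rfl hts
      obtain ⟨Γ, gs, us, hrun, hd, hinr, htu, htg, hforall⟩ := key u.length (le_refl _)
      have hgsnil : ∀ g ∈ gs, g = [] := by
        have hfn : gs.flatten = [] := by
          have hp := htg.perm
          rw [List.drop_length] at hp
          exact hp.eq_nil
        exact List.flatten_eq_nil_iff.mp hfn
      have husne : us ≠ [] := by
        intro h
        apply hnil
        have hfl : us.flatten = [] := by rw [h]; rfl
        have hp := htu.perm
        rw [hfl, List.take_length] at hp
        exact hp.symm.eq_nil
      rcases gs with _ | ⟨g0, gs2⟩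
      · exact absurd rfl (dcmp_gs_ne hd)
      rcases gs2 with _ | ⟨g1, gs3⟩
      · exfalso
        have h1 := dcmp_len hd
        simp only [List.length_cons, List.length_nil] at h1
        exact husne (List.eq_nil_of_length_eq_zero (by omega))
      rcases gs3 with _ | ⟨g2, gs4⟩
      swap
      · exact absurd (hgsnil g1 (by simp)) (inr_second hinr (by simp))
      have hg0 : g0 = [] := hgsnil g0 (by simp)
      have hg1 : g1 = [] := hgsnil g1 (by simp)
      subst hg0
      subst hg1
      cases hforall with
      | cons h0 hf2 =>
        cases hf2 with
        | cons h1 hf3 =>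
          cases hf3
          refine ⟨_, _, ?_, h0, h1⟩
          rw [← List.take_length (l := u)]
          exact hrun
  · rintro (⟨rfl, hmem⟩ | ⟨-, E0, E1, hrun, h0, h1⟩)
    · exact ⟨[], hmem, TrEq.refl []⟩
    · obtain ⟨us, z, hd, hz, ht⟩ := machine_sound hsym hrun
        (List.Forall₂.cons h0 (List.Forall₂.cons h1 List.Forall₂.nil))
      obtain ⟨u1, rfl, rfl⟩ := dcmp_two hd
      exact ⟨z, hz, treq_cast rfl (by simp) ht⟩
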